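/- Let a, σ, T > 0, set γ = √(a² + 2σ²), and for t ∈ [0,T] define D(t) = (γ − a) + (γ + a)·exp(γ(T − t)) and B(t) = 2(1 − exp(γ(T − t)))/D(t). Then D(t) ≥ 2γ > 0 for all t ∈ [0,T], B(T) = 0, B is differentiable on [0,T], and B satisfies the Riccati equation B'(t) = a·B(t) − (σ²/2)·B(t)² + 1 for all t ∈ [0,T]. -/

import Mathlib

open Real

/-- Properties of the exponent function `B` in the closed-form CIR bond price:
with `γ = √(a² + 2σ²)`, `D t = (γ - a) + (γ + a)·exp(γ(T - t))` and
`B t = 2(1 - exp(γ(T - t)))/D t`, we have `D ≥ 2γ > 0` on `[0,T]`, `B T = 0`,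
and `B` solves the Riccati equation `B' = a·B - (σ²/2)·B² + 1` on `[0,T]`. -/
theorem cir_B_riccati (a σ T : ℝ) (ha : 0 < a) (hσ : 0 < σ) (hT : 0 < T)
    (γ : ℝ) (hγ : γ = Real.sqrt (a ^ 2 + 2 * σ ^ 2))
    (D B : ℝ → ℝ)
    (hD : ∀ t, D t = (γ - a) + (γ + a) * Real.exp (γ * (T - t)))
    (hB : ∀ t, B t = 2 * (1 - Real.exp (γ * (T - t))) / D t) :
    (∀ t ∈ Set.Icc (0 : ℝ) T, 2 * γ ≤ D t) ∧ 0 < 2 * γ ∧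
    B T = 0 ∧
    (∀ t ∈ Set.Icc (0 : ℝ) T,
      HasDerivAt B (a * B t - σ ^ 2 / 2 * B t ^ 2 + 1) t) := by
  have hγ2 : γ ^ 2 = a ^ 2 + 2 * σ ^ 2 := by
    rw [hγ]; exact Real.sq_sqrt (by positivity)
  have hγpos : 0 < γ := by
    rw [hγ]; exact Real.sqrt_pos.mpr (by positivity)
  have haγ : a < γ := by nlinarith
  have hσ2 : σ ^ 2 = (γ ^ 2 - a ^ 2) / 2 := by linarith
  have hDge : ∀ t ∈ Set.Icc (0 : ℝ) T, 2 * γ ≤ D t := by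
    intro t ht
    have hE : (1 : ℝ) ≤ Real.exp (γ * (T - t)) :=
      Real.one_le_exp (by nlinarith [ht.2])
    rw [hD]; nlinarith
  refine ⟨hDge, by linarith, ?_, ?_⟩
  · rw [hB T]; simp
  · intro t ht
    have hDpos : 0 < D t := lt_of_lt_of_le (by linarith) (hDge t ht)
    have hDne : (γ - a) + (γ + a) * Real.exp (γ * (T - t)) ≠ 0 := by
      rw [← hD]; exact ne_of_gt hDpos
    have hBfun : B = fun s =>
        2 * (1 - Real.exp (γ * (T - s))) / ((γ - a) + (γ + a) * Real.exp (γ * (T - s))) := by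
      funext s; rw [hB, hD]
    have h1 : HasDerivAt (fun s : ℝ => γ * (T - s)) (-γ) t := by
      have := ((hasDerivAt_id t).const_sub T).const_mul γ
      simpa using this
    have hE := h1.exp
    have hnum : HasDerivAt (fun s : ℝ => 2 * (1 - Real.exp (γ * (T - s))))
        (2 * (-(Real.exp (γ * (T - t)) * (-γ)))) t := by
      exact ((hE.const_sub 1)).const_mul 2
    have hden : HasDerivAt (fun s : ℝ => (γ - a) + (γ + a) * Real.exp (γ * (T - s)))
        ((γ + a) * (Real.exp (γ * (T - t)) * (-γ))) t := by
      exact (hE.const_mul (γ + a)).const_add (γ - a)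
    have hdiv := hnum.div hden hDne
    rw [hBfun]
    convert hdiv using 1
    case e'_4 => rfl
    case e'_5 => rfl
    case e'_8 => rfl
    simp only
    rw [hσ2]
    have hE1 : Real.exp (γ * (T - t)) ≠ 0 := Real.exp_ne_zero _
    field_simp [show γ - a + Real.exp (γ * (T - t)) * (γ + a) ≠ 0 by rwa [mul_comm]]
    ring
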